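/- If f : ℝⁿ × ℝᵖ → ℝ is M_f-Lipschitz, g satisfies the strong-convexity and Lipschitz-Hessian assumptions, Φ(x) := f(x, y*(x)) is bounded below on ℝⁿ, and β ≥ M_f Q_g / μ³, then the function h(x,y) = f(x, A(x,y)) + (β/2)‖∇_y g(x,y)‖² satisfies h(x,y) ≥ f(x, y*(x)) for all (x,y); in particular h is bounded below on ℝⁿ × ℝᵖ. -/

import Mathlib

variable {E : Type*} [NormedAddCommGroup E] [InnerProductSpace ℝ E] [FiniteDimensional ℝ E]

lemma aux_isUnit {μ : ℝ} (hμ : 0 < μ) (T : E →L[ℝ] E)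
    (h : ∀ v, μ * ‖v‖ ^ 2 ≤ (inner ℝ v (T v) : ℝ)) : IsUnit T := by
  have hinj : Function.Injective T := by
    intro a b hab
    have h0 : T (a - b) = 0 := by rw [map_sub, hab, sub_self]
    have := h (a - b)
    rw [h0, inner_zero_right] at this
    have hz : ‖a - b‖ = 0 := by
      by_contra hne
      have hpos : 0 < ‖a - b‖ := lt_of_le_of_ne (norm_nonneg _) (Ne.symm hne)
      nlinarith [mul_pos hμ (pow_pos hpos 2)]
    rwa [norm_eq_zero, sub_eq_zero] at hz
  have hbij : Function.Bijective T :=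
    ⟨hinj, (LinearMap.injective_iff_surjective (f := (T : E →ₗ[ℝ] E))).mp hinj⟩
  let e : E ≃ₗ[ℝ] E := LinearEquiv.ofBijective (T : E →ₗ[ℝ] E) hbij
  let eL : E ≃L[ℝ] E := e.toContinuousLinearEquiv
  have : (eL.toUnit : E →L[ℝ] E) = T := by
    ext v; rfl
  exact this ▸ eL.toUnit.isUnit

lemma aux_inv_apply (T : E →L[ℝ] E) (hu : IsUnit T) (v : E) :
    Ring.inverse T (T v) = v := by
  have := Ring.inverse_mul_cancel T hu
  calc Ring.inverse T (T v) = (Ring.inverse T * T) v := rfl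
    _ = v := by rw [this]; rfl

lemma aux_apply_inv (T : E →L[ℝ] E) (hu : IsUnit T) (w : E) :
    T (Ring.inverse T w) = w := by
  have := Ring.mul_inverse_cancel T hu
  calc T (Ring.inverse T w) = (T * Ring.inverse T) w := rfl
    _ = w := by rw [this]; rfl

lemma aux_inv_norm {μ : ℝ} (hμ : 0 < μ) (T : E →L[ℝ] E)
    (h : ∀ v, μ * ‖v‖ ^ 2 ≤ (inner ℝ v (T v) : ℝ)) (w : E) :
    ‖Ring.inverse T w‖ ≤ μ⁻¹ * ‖w‖ := by
  set v := Ring.inverse T w with hv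
  have hTv : T v = w := aux_apply_inv T (aux_isUnit hμ T h) w
  have h1 : μ * ‖v‖ ^ 2 ≤ ‖v‖ * ‖w‖ := by
    calc μ * ‖v‖ ^ 2 ≤ (inner ℝ v (T v) : ℝ) := h v
      _ ≤ ‖v‖ * ‖T v‖ := real_inner_le_norm v (T v)
      _ = ‖v‖ * ‖w‖ := by rw [hTv]
  rcases eq_or_lt_of_le (norm_nonneg v) with h0 | h0
  · rw [← h0]; positivity
  · rw [inv_mul_eq_div, le_div_iff₀ hμ]
    nlinarith

open intervalIntegral in
lemma aux_repr (G : E → E) (H : E → (E →L[ℝ] E)) (hG : ∀ y, HasFDerivAt G (H y) y)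
    (hHcont : Continuous H) (y₀ y : E) (hG0 : G y₀ = 0) :
    G y = ∫ t in (0:ℝ)..1, H (y₀ + t • (y - y₀)) (y - y₀) := by
  set v := y - y₀ with hv
  set c : ℝ → E := fun t => y₀ + t • v with hc
  have hcont : Continuous fun t : ℝ => H (c t) v :=
    ((ContinuousLinearMap.apply ℝ E v).continuous).comp
      (hHcont.comp (by continuity))
  have hderiv : ∀ t ∈ Set.uIcc (0:ℝ) 1, HasDerivAt (fun t => G (c t)) (H (c t) v) t := by
    intro t _
    have hc' : HasDerivAt c v t := by
      have h1 : HasDerivAt (fun t : ℝ => t • v) ((1:ℝ) • v) t := (hasDerivAt_id t).smul_const v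
      simpa [hc] using h1.const_add y₀
    exact (hG (c t)).comp_hasDerivAt t hc'
  have := intervalIntegral.integral_eq_sub_of_hasDerivAt hderiv (hcont.intervalIntegrable 0 1)
  rw [this]
  simp only [hc]
  rw [show y₀ + (1:ℝ) • v = y by simp [hv], show y₀ + (0:ℝ) • v = y₀ by simp, hG0, sub_zero]

open intervalIntegral in
lemma aux_lower {μ : ℝ} (hμ : 0 < μ) (G : E → E) (H : E → (E →L[ℝ] E))
    (hG : ∀ y, HasFDerivAt G (H y) y) (hHcont : Continuous H)
    (hsc : ∀ z v, μ * ‖v‖ ^ 2 ≤ (inner ℝ v (H z v) : ℝ))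
    (y₀ y : E) (hG0 : G y₀ = 0) :
    μ * ‖y - y₀‖ ≤ ‖G y‖ := by
  set v := y - y₀ with hv
  have hcont : Continuous fun t : ℝ => H (y₀ + t • v) v :=
    ((ContinuousLinearMap.apply ℝ E v).continuous).comp (hHcont.comp (by continuity))
  have hint : IntervalIntegrable (fun t : ℝ => H (y₀ + t • v) v) MeasureTheory.volume 0 1 :=
    hcont.intervalIntegrable 0 1
  have hrepr := aux_repr G H hG hHcont y₀ y hG0
  have hinner : (inner ℝ v (G y) : ℝ) = ∫ t in (0:ℝ)..1, (inner ℝ v (H (y₀ + t • v) v) : ℝ) := by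
    rw [hrepr, ← hv]
    exact ((innerSL ℝ v).intervalIntegral_comp_comm hint).symm
  have hlow : μ * ‖v‖ ^ 2 ≤ (inner ℝ v (G y) : ℝ) := by
    rw [hinner]
    have : μ * ‖v‖ ^ 2 = ∫ _ in (0:ℝ)..1, μ * ‖v‖ ^ 2 := by
      simp
    rw [this]
    apply intervalIntegral.integral_mono_on zero_le_one
      (intervalIntegrable_const) (((innerSL ℝ v).continuous.comp hcont).intervalIntegrable 0 1)
    intro t _
    exact hsc _ v
  have hub : (inner ℝ v (G y) : ℝ) ≤ ‖v‖ * ‖G y‖ := real_inner_le_norm _ _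
  rcases eq_or_lt_of_le (norm_nonneg v) with h0 | h0
  · rw [← h0]; simp [norm_nonneg]
  · have := hlow.trans hub
    nlinarith

open intervalIntegral MeasureTheory in
lemma aux_newton {Qg : ℝ} (G : E → E) (H : E → (E →L[ℝ] E))
    (hG : ∀ y, HasFDerivAt G (H y) y) (hHcont : Continuous H)
    (hH : ∀ a b, ‖H a - H b‖ ≤ Qg * ‖a - b‖)
    (y₀ y : E) (hG0 : G y₀ = 0) :
    ‖G y - H y (y - y₀)‖ ≤ Qg / 2 * ‖y - y₀‖ ^ 2 := by
  set v := y - y₀ with hv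
  have hcont : Continuous fun t : ℝ => H (y₀ + t • v) v :=
    ((ContinuousLinearMap.apply ℝ E v).continuous).comp (hHcont.comp (by continuity))
  have hint : IntervalIntegrable (fun t : ℝ => H (y₀ + t • v) v) volume 0 1 :=
    hcont.intervalIntegrable 0 1
  have hrepr := aux_repr G H hG hHcont y₀ y hG0
  have hconst : H y v = ∫ _ in (0:ℝ)..1, H y v := by simp
  have hdiff : G y - H y v = ∫ t in (0:ℝ)..1, (H (y₀ + t • v) v - H y v) := by
    rw [hrepr, ← hv, hconst]
    rw [intervalIntegral.integral_sub hint intervalIntegrable_const]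
    simp
  rw [hdiff]
  have hbnd : ∀ t ∈ Set.Icc (0:ℝ) 1,
      ‖H (y₀ + t • v) v - H y v‖ ≤ Qg * ‖v‖ ^ 2 * (1 - t) := by
    intro t ht
    have hyc : y₀ + t • v - y = (t - 1) • v := by
      have : y = y₀ + v := by rw [hv]; abel
      rw [this]
      module
    calc ‖H (y₀ + t • v) v - H y v‖ = ‖(H (y₀ + t • v) - H y) v‖ := by
          simp [ContinuousLinearMap.sub_apply]
      _ ≤ ‖H (y₀ + t • v) - H y‖ * ‖v‖ := ContinuousLinearMap.le_opNorm _ _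
      _ ≤ (Qg * ‖y₀ + t • v - y‖) * ‖v‖ := by
          apply mul_le_mul_of_nonneg_right (hH _ _) (norm_nonneg _)
      _ = Qg * ‖v‖ ^ 2 * (1 - t) := by
          rw [hyc, norm_smul, Real.norm_eq_abs, abs_of_nonpos (by linarith [ht.2]),
            neg_sub]
          ring
  calc ‖∫ t in (0:ℝ)..1, (H (y₀ + t • v) v - H y v)‖
      ≤ ∫ t in (0:ℝ)..1, Qg * ‖v‖ ^ 2 * (1 - t) := by
        refine (intervalIntegral.norm_integral_le_integral_norm zero_le_one).trans ?_
        apply intervalIntegral.integral_mono_on zero_le_one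
          ((hcont.sub continuous_const).norm.intervalIntegrable 0 1)
          (Continuous.intervalIntegrable (by continuity) 0 1)
        exact hbnd
    _ = Qg / 2 * ‖v‖ ^ 2 := by
        rw [intervalIntegral.integral_const_mul]
        rw [intervalIntegral.integral_sub intervalIntegrable_const
          (Continuous.intervalIntegrable (by continuity) 0 1)]
        simp [integral_id]
        ring


/-- If `f` is `Mf`-Lipschitz, `g` satisfies the strong-convexity and
Lipschitz-Hessian assumptions, `Φ(x) := f(x, y*(x))` is bounded below, and
`β ≥ Mf Qg / μ³`, then `h(x,y) = f(x, A(x,y)) + (β/2)‖∇_y g(x,y)‖²` satisfies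
`h(x,y) ≥ f(x, y*(x))` for all `(x,y)`; in particular `h` is bounded below. -/
theorem cdb_objective_bounded_below (n p : ℕ) (μ Qg Mf β : ℝ) (hμ : 0 < μ)
    (f g : EuclideanSpace ℝ (Fin n) × EuclideanSpace ℝ (Fin p) → ℝ)
    (gradY : EuclideanSpace ℝ (Fin n) × EuclideanSpace ℝ (Fin p) → EuclideanSpace ℝ (Fin p))
    (hessYY : EuclideanSpace ℝ (Fin n) × EuclideanSpace ℝ (Fin p) →
      EuclideanSpace ℝ (Fin p) →L[ℝ] EuclideanSpace ℝ (Fin p))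
    (ystar : EuclideanSpace ℝ (Fin n) → EuclideanSpace ℝ (Fin p))
    -- `f` is `Mf`-Lipschitz continuous
    (hf : ∀ q q', |f q - f q'| ≤ Mf * ‖q - q'‖)
    (hgY : ∀ x y, HasGradientAt (fun y' => g (x, y')) (gradY (x, y)) y)
    (hhess : ∀ x y, HasFDerivAt (fun y' => gradY (x, y')) (hessYY (x, y)) y)
    -- strong convexity in `y`: `∇²_{yy} g(x,y) ⪰ μ I`
    (hsc : ∀ q v, μ * ‖v‖ ^ 2 ≤ (inner ℝ v (hessYY q v) : ℝ))
    -- the Hessian map is `Qg`-Lipschitz in operator norm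
    (hQ : ∀ q q', ‖hessYY q - hessYY q'‖ ≤ Qg * ‖q - q'‖)
    -- `y*(x)` minimizes `g(x, ·)`
    (hystar : ∀ x, IsMinOn (fun y' => g (x, y')) Set.univ (ystar x))
    -- `Φ(x) = f(x, y*(x))` is bounded below
    (hΦ : BddBelow (Set.range fun x => f (x, ystar x)))
    (hβ : Mf * Qg / μ ^ 3 ≤ β) :
    (∀ x y, f (x, ystar x) ≤
        f (x, y - Ring.inverse (hessYY (x, y)) (gradY (x, y))) + β / 2 * ‖gradY (x, y)‖ ^ 2) ∧
      BddBelow (Set.range fun q : EuclideanSpace ℝ (Fin n) × EuclideanSpace ℝ (Fin p) =>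
        f (q.1, q.2 - Ring.inverse (hessYY q) (gradY q)) + β / 2 * ‖gradY q‖ ^ 2) := by
  have key : ∀ x y, f (x, ystar x) ≤
      f (x, y - Ring.inverse (hessYY (x, y)) (gradY (x, y))) + β / 2 * ‖gradY (x, y)‖ ^ 2 := by
    rcases subsingleton_or_nontrivial (EuclideanSpace ℝ (Fin n) × EuclideanSpace ℝ (Fin p)) with hsub | hnt
    · -- trivial case
      have hsubE : Subsingleton (EuclideanSpace ℝ (Fin p)) := by
        constructor
        intro a b
        have : ((0, a) : EuclideanSpace ℝ (Fin n) × EuclideanSpace ℝ (Fin p)) = (0, b) :=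
          Subsingleton.elim _ _
        exact congrArg Prod.snd this
      intro x y
      have h1 : ystar x = y - Ring.inverse (hessYY (x, y)) (gradY (x, y)) :=
        Subsingleton.elim _ _
      have h2 : gradY (x, y) = 0 := Subsingleton.elim _ _
      rw [← h1, h2]
      simp
    · -- get nonnegativity of Mf and Qg
      obtain ⟨q, q', hqq⟩ := exists_pair_ne (EuclideanSpace ℝ (Fin n) × EuclideanSpace ℝ (Fin p))
      have hnorm : 0 < ‖q - q'‖ := by
        rw [norm_pos_iff, sub_ne_zero]; exact hqq
      have hMf : 0 ≤ Mf := by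
        have := (abs_nonneg (f q - f q')).trans (hf q q')
        nlinarith
      have hQg : 0 ≤ Qg := by
        have := (norm_nonneg (hessYY q - hessYY q')).trans (hQ q q')
        nlinarith
      intro x y
      -- set up slice functions
      set G : EuclideanSpace ℝ (Fin p) → EuclideanSpace ℝ (Fin p) := fun y' => gradY (x, y') with hGdef
      set H : EuclideanSpace ℝ (Fin p) → (EuclideanSpace ℝ (Fin p) →L[ℝ] EuclideanSpace ℝ (Fin p)) := fun y' => hessYY (x, y') with hHdef
      have hG : ∀ y', HasFDerivAt G (H y') y' := fun y' => hhess x y'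
      have hprodnorm : ∀ a b : EuclideanSpace ℝ (Fin p),
          ‖((x, a) : EuclideanSpace ℝ (Fin n) × EuclideanSpace ℝ (Fin p)) - (x, b)‖ = ‖a - b‖ := by
        intro a b
        rw [Prod.mk_sub_mk, Prod.norm_def]
        simp
      have hH' : ∀ a b, ‖H a - H b‖ ≤ Qg * ‖a - b‖ := by
        intro a b
        have h := hQ (x, a) (x, b)
        rwa [hprodnorm a b] at h
      have hHcont : Continuous H := by
        apply (LipschitzWith.of_dist_le_mul (K := Real.toNNReal Qg) ?_).continuous
        intro a b
        rw [dist_eq_norm, dist_eq_norm]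
        calc ‖H a - H b‖ ≤ Qg * ‖a - b‖ := hH' a b
          _ ≤ Real.toNNReal Qg * ‖a - b‖ :=
            mul_le_mul_of_nonneg_right (Real.le_coe_toNNReal Qg) (norm_nonneg _)
      have hsc' : ∀ z v, μ * ‖v‖ ^ 2 ≤ (inner ℝ v (H z v) : ℝ) := fun z v => hsc (x, z) v
      -- gradient vanishes at the minimizer
      have hG0 : G (ystar x) = 0 := by
        have hloc : IsLocalMin (fun y' => g (x, y')) (ystar x) :=
          Filter.Eventually.of_forall fun y' => isMinOn_iff.mp (hystar x) y' (Set.mem_univ y')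
        have hfd : HasFDerivAt (fun y' => g (x, y'))
            (InnerProductSpace.toDual ℝ (EuclideanSpace ℝ (Fin p)) (G (ystar x))) (ystar x) :=
          hasGradientAt_iff_hasFDerivAt.mp (hgY x (ystar x))
        have hzero := hloc.hasFDerivAt_eq_zero hfd
        have : (InnerProductSpace.toDual ℝ (EuclideanSpace ℝ (Fin p))) (G (ystar x)) =
            (InnerProductSpace.toDual ℝ (EuclideanSpace ℝ (Fin p))) 0 := by rw [hzero, map_zero]
        exact (InnerProductSpace.toDual ℝ (EuclideanSpace ℝ (Fin p))).injective this
      set y₀ := ystar x with hy₀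
      set v := y - y₀ with hv
      have hu : IsUnit (H y) := aux_isUnit hμ (H y) (hsc' y)
      -- identity: A - y₀ = (H y)⁻¹ (H y v - G y)
      have hid : y - Ring.inverse (H y) (G y) - y₀ = Ring.inverse (H y) (H y v - G y) := by
        rw [map_sub, aux_inv_apply (H y) hu v, hv]
        abel
      have hnewton : ‖H y v - G y‖ ≤ Qg / 2 * ‖v‖ ^ 2 := by
        rw [norm_sub_rev]
        exact aux_newton G H hG hHcont hH' y₀ y hG0
      have hAdist : ‖y - Ring.inverse (H y) (G y) - y₀‖ ≤ μ⁻¹ * (Qg / 2 * ‖v‖ ^ 2) := by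
        rw [hid]
        exact (aux_inv_norm hμ (H y) (hsc' y) _).trans
          (mul_le_mul_of_nonneg_left hnewton (inv_nonneg.mpr hμ.le))
      have hvG : μ * ‖v‖ ≤ ‖G y‖ := aux_lower hμ G H hG hHcont hsc' y₀ y hG0
      have hv1 : ‖v‖ ≤ μ⁻¹ * ‖G y‖ := by
        rw [inv_mul_eq_div, le_div_iff₀ hμ]
        linarith [hvG]
      have hv2 : ‖v‖ ^ 2 ≤ (μ⁻¹ * ‖G y‖) ^ 2 := by
        apply pow_le_pow_left₀ (norm_nonneg _) hv1
      -- Lipschitz bound on f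
      set A := y - Ring.inverse (H y) (G y) with hA
      have hlip : f (x, y₀) ≤ f (x, A) + Mf * ‖A - y₀‖ := by
        have h1 := hf (x, y₀) (x, A)
        have h2 := abs_le.mp h1
        have h3 : ‖((x, y₀) : EuclideanSpace ℝ (Fin n) × EuclideanSpace ℝ (Fin p)) - (x, A)‖ = ‖A - y₀‖ := by
          rw [hprodnorm, norm_sub_rev]
        rw [h3] at h2
        linarith [h2.2]
      have hchain : Mf * ‖A - y₀‖ ≤ β / 2 * ‖G y‖ ^ 2 := by
        have c1 : Mf * ‖A - y₀‖ ≤ Mf * (μ⁻¹ * (Qg / 2 * ‖v‖ ^ 2)) :=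
          mul_le_mul_of_nonneg_left hAdist hMf
        have c2 : Mf * (μ⁻¹ * (Qg / 2 * ‖v‖ ^ 2)) ≤
            Mf * (μ⁻¹ * (Qg / 2 * (μ⁻¹ * ‖G y‖) ^ 2)) := by
          apply mul_le_mul_of_nonneg_left _ hMf
          apply mul_le_mul_of_nonneg_left _ (inv_nonneg.mpr hμ.le)
          apply mul_le_mul_of_nonneg_left hv2 (by positivity)
        have c3 : Mf * (μ⁻¹ * (Qg / 2 * (μ⁻¹ * ‖G y‖) ^ 2)) =
            (Mf * Qg / μ ^ 3) / 2 * ‖G y‖ ^ 2 := by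
          field_simp
        have c4 : (Mf * Qg / μ ^ 3) / 2 * ‖G y‖ ^ 2 ≤ β / 2 * ‖G y‖ ^ 2 := by
          apply mul_le_mul_of_nonneg_right _ (by positivity)
          linarith
        linarith
      calc f (x, ystar x) = f (x, y₀) := by rw [hy₀]
        _ ≤ f (x, A) + Mf * ‖A - y₀‖ := hlip
        _ ≤ f (x, A) + β / 2 * ‖G y‖ ^ 2 := by linarith
        _ = f (x, y - Ring.inverse (hessYY (x, y)) (gradY (x, y)))
            + β / 2 * ‖gradY (x, y)‖ ^ 2 := rfl
  refine ⟨key, ?_⟩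
  obtain ⟨c, hc⟩ := hΦ
  refine ⟨c, ?_⟩
  rintro r ⟨q, rfl⟩
  calc c ≤ f (q.1, ystar q.1) := hc ⟨q.1, rfl⟩
    _ ≤ f (q.1, q.2 - Ring.inverse (hessYY (q.1, q.2)) (gradY (q.1, q.2)))
        + β / 2 * ‖gradY (q.1, q.2)‖ ^ 2 := key q.1 q.2
    _ = _ := by rfl
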